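/- Let f be an electrical s-t flow on a graph G with resistances r, and suppose edge h satisfies f(h)²·r_h = β·E_r(f) with 0 ≤ β ≤ 1. If the resistance of h is multiplied by (1+ε) for 0 < ε ≤ 1 (other resistances unchanged, giving r'), then R_eff(r') ≥ (1 + εβ/2)·R_eff(r). -/

import Mathlib

open Finset

/-- Effective s-t conductance: infimum over potentials with φ(s)=1, φ(t)=0 of the
Dirichlet energy. -/
noncomputable def Ceff {V E : Type*} [Fintype E] (ep : E → V × V) (s t : V)
    (r : E → ℝ) : ℝ :=
  sInf {x | ∃ φ : V → ℝ, φ s = 1 ∧ φ t = 0 ∧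
    x = ∑ e, (φ (ep e).1 - φ (ep e).2) ^ 2 / r e}

/-- Effective s-t resistance. -/
noncomputable def Reff {V E : Type*} [Fintype E] (ep : E → V × V) (s t : V)
    (r : E → ℝ) : ℝ :=
  1 / Ceff ep s t r

/-- If an edge `h` accounts for a β fraction of the energy of the electrical s-t flow
(0 ≤ β ≤ 1) and its resistance is multiplied by (1+ε) with 0 < ε ≤ 1, the effective
resistance increases by a factor of at least (1 + εβ/2). -/
theorem reff_increase_of_slight_scaling {V E : Type*} [Fintype V] [Fintype E]
    [DecidableEq E]
    (ep : E → V × V) (s t : V) (hst : s ≠ t)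
    (r r' : E → ℝ) (hr : ∀ e, 0 < r e)
    (f : E → ℝ) (φ : V → ℝ) (h : E) (β ε : ℝ)
    (hβ0 : 0 ≤ β) (hβ1 : β ≤ 1) (hε0 : 0 < ε) (hε1 : ε ≤ 1)
    (hφs : φ s = 1) (hφt : φ t = 0)
    (hmin : ∑ e, (φ (ep e).1 - φ (ep e).2) ^ 2 / r e = Ceff ep s t r)
    (hOhm : ∀ e, f e = (φ (ep e).1 - φ (ep e).2) / r e)
    (hβ : f h ^ 2 * r h = β * ∑ e, r e * f e ^ 2)
    (hr' : ∀ e, r' e = if e = h then (1 + ε) * r e else r e) :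
    Reff ep s t r' ≥ (1 + ε * β / 2) * Reff ep s t r := by
  set d : E → ℝ := fun e => φ (ep e).1 - φ (ep e).2 with hd
  set C : ℝ := ∑ e, d e ^ 2 / r e with hCdef
  have h1ε : (0:ℝ) < 1 + ε := by linarith
  have hr'pos : ∀ e, 0 < r' e := by
    intro e; rw [hr']; split
    · exact mul_pos h1ε (hr e)
    · exact hr e
  have hC0 : 0 ≤ C := by
    apply Finset.sum_nonneg
    intro e _
    have := hr e
    positivity
  -- sum of r e * f e ^2 equals C
  have hsumE : ∑ e, r e * f e ^ 2 = C := by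
    apply Finset.sum_congr rfl
    intro e _
    rw [hOhm e]
    have := (hr e).ne'
    simp only [hd]
    field_simp
  -- edge h energy relation
  have hβC : d h ^ 2 / r h = β * C := by
    have hrh := (hr h).ne'
    have h2 := hβ
    rw [hsumE, hOhm h] at h2
    rw [show d h ^ 2 / r h = ((φ (ep h).1 - φ (ep h).2) / r h) ^ 2 * r h by
      simp only [hd]; field_simp]
    exact h2
  -- energy of φ with new resistances
  have key : ∑ e, d e ^ 2 / r' e = C * (1 - ε * β / (1 + ε)) := by
    have step : ∀ e, d e ^ 2 / r' e
        = d e ^ 2 / r e + (if e = h then d h ^ 2 / ((1 + ε) * r h) - d h ^ 2 / r h else 0) := by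
      intro e
      rw [hr']
      split
      · subst e; ring
      · ring
    rw [Finset.sum_congr rfl (fun e _ => step e), Finset.sum_add_distrib,
      Finset.sum_ite_eq' Finset.univ h, if_pos (Finset.mem_univ h)]
    have hrh := (hr h).ne'
    have hf : d h ^ 2 / ((1 + ε) * r h) = β * C / (1 + ε) := by
      rw [div_mul_eq_div_div_swap, hβC]
    rw [hf, hβC]
    field_simp
    ring
  -- nonempty / bddBelow facts
  have hbdd : BddBelow {x | ∃ ψ : V → ℝ, ψ s = 1 ∧ ψ t = 0 ∧
      x = ∑ e, (ψ (ep e).1 - ψ (ep e).2) ^ 2 / r' e} := by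
    refine ⟨0, ?_⟩
    rintro x ⟨ψ, _, _, rfl⟩
    apply Finset.sum_nonneg
    intro e _
    have := hr'pos e
    positivity
  have hmem : (∑ e, d e ^ 2 / r' e) ∈ {x | ∃ ψ : V → ℝ, ψ s = 1 ∧ ψ t = 0 ∧
      x = ∑ e, (ψ (ep e).1 - ψ (ep e).2) ^ 2 / r' e} := ⟨φ, hφs, hφt, rfl⟩
  have hbddr : BddBelow {x | ∃ ψ : V → ℝ, ψ s = 1 ∧ ψ t = 0 ∧
      x = ∑ e, (ψ (ep e).1 - ψ (ep e).2) ^ 2 / r e} := by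
    refine ⟨0, ?_⟩
    rintro x ⟨ψ, _, _, rfl⟩
    apply Finset.sum_nonneg
    intro e _
    have := hr e
    positivity
  have hCle : Ceff ep s t r' ≤ C * (1 - ε * β / (1 + ε)) := by
    rw [← key]
    exact csInf_le hbdd hmem
  have hC'0 : 0 ≤ Ceff ep s t r' := by
    apply Real.sInf_nonneg
    rintro x ⟨ψ, _, _, rfl⟩
    apply Finset.sum_nonneg
    intro e _
    have := hr'pos e
    positivity
  rcases eq_or_lt_of_le hC0 with hCz | hCpos
  · -- degenerate case C = 0
    simp only [Reff, ← hmin, ← hCz]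
    simp only [div_zero, mul_zero]
    exact one_div_nonneg.mpr hC'0
  -- main case C > 0
  -- lower bound on Ceff r'
  have hCge : C / (1 + ε) ≤ Ceff ep s t r' := by
    apply le_csInf ⟨_, hmem⟩
    rintro x ⟨ψ, hs, ht, rfl⟩
    have step : ∀ e, (ψ (ep e).1 - ψ (ep e).2) ^ 2 / ((1 + ε) * r e)
        ≤ (ψ (ep e).1 - ψ (ep e).2) ^ 2 / r' e := by
      intro e
      apply div_le_div_of_nonneg_left (by positivity) (hr'pos e)
      rw [hr']
      split
      · exact le_refl _
      · nlinarith [hr e]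
    have hψ : C ≤ ∑ e, (ψ (ep e).1 - ψ (ep e).2) ^ 2 / r e := by
      rw [hmin]
      exact csInf_le hbddr ⟨ψ, hs, ht, rfl⟩
    calc C / (1 + ε) ≤ (∑ e, (ψ (ep e).1 - ψ (ep e).2) ^ 2 / r e) / (1 + ε) := by
          gcongr
      _ = ∑ e, (ψ (ep e).1 - ψ (ep e).2) ^ 2 / ((1 + ε) * r e) := by
          rw [Finset.sum_div]
          apply Finset.sum_congr rfl
          intro e _
          rw [div_mul_eq_div_div_swap]
      _ ≤ _ := Finset.sum_le_sum fun e _ => step e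
  have hC'pos : 0 < Ceff ep s t r' := lt_of_lt_of_le (by positivity) hCge
  -- conclude
  simp only [Reff, ← hmin, ge_iff_le]
  rw [mul_one_div, div_le_div_iff₀ hCpos hC'pos]
  -- (1 + ε*β/2) * Ceff r' ≤ C
  have hxy : ε * β / 2 ≤ ε * β / (1 + ε) :=
    div_le_div_of_nonneg_left (by positivity) h1ε (by linarith)
  have hy0 : (0:ℝ) ≤ ε * β / 2 := by positivity
  have h5 : (1 + ε * β / 2) * (1 - ε * β / (1 + ε)) ≤ 1 := by
    nlinarith [mul_le_mul_of_nonneg_left hxy (by positivity : (0:ℝ) ≤ 1 + ε * β / 2),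
      sq_nonneg (ε * β / 2)]
  nlinarith [mul_le_mul_of_nonneg_left hCle (by positivity : (0:ℝ) ≤ 1 + ε * β / 2),
    mul_le_mul_of_nonneg_left h5 hCpos.le]
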